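/- Let T be the unit regular tetrahedron in ℝ³. The inverted scaled tetrahedron −(1/2)•T can hide behind T. -/

import Mathlib

open scoped Pointwise
open MeasureTheory

/-- Orthogonal projection of a point onto the hyperplane `u^⊥`. -/
noncomputable def proj {n : ℕ} (u x : EuclideanSpace ℝ (Fin n)) : EuclideanSpace ℝ (Fin n) :=
  (Submodule.orthogonalProjectionOnto (ℝ ∙ u)ᗮ x : EuclideanSpace ℝ (Fin n))

/-- `A` can hide behind `B`: for every unit direction `u` there is a translation vector in
`u^⊥` moving the shadow of `A` inside the shadow of `B`. -/
def HidesBehind {n : ℕ} (A B : Set (EuclideanSpace ℝ (Fin n))) : Prop :=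
  ∀ u : EuclideanSpace ℝ (Fin n), ‖u‖ = 1 →
    ∃ v ∈ (ℝ ∙ u)ᗮ, v +ᵥ (proj u '' A) ⊆ proj u '' B

/-- The unit regular tetrahedron in `ℝ³`. -/
noncomputable def T : Set (EuclideanSpace ℝ (Fin 3)) :=
  convexHull ℝ {!₂[0, 0, 0], !₂[1, 0, 0], !₂[1/2, Real.sqrt 3 / 2, 0],
    !₂[1/2, Real.sqrt 3 / 6, Real.sqrt (2/3)]}

section Aux

variable {E : Type*} [AddCommGroup E] [Module ℝ E]

lemma mem_hull4 (a b c d : E) {w0 w1 w2 w3 : ℝ} (h0 : 0 ≤ w0) (h1 : 0 ≤ w1)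
    (h2 : 0 ≤ w2) (h3 : 0 ≤ w3) (hs : w0 + w1 + w2 + w3 = 1) :
    w0 • a + w1 • b + w2 • c + w3 • d ∈ convexHull ℝ ({a, b, c, d} : Set E) := by
  have h := Finset.centerMass_mem_convexHull (Finset.univ : Finset (Fin 4))
    (w := ![w0, w1, w2, w3]) (z := ![a, b, c, d]) (s := ({a,b,c,d} : Set E))
    (by intro i _; fin_cases i <;> assumption)
    (by simp [Fin.sum_univ_four]; linarith)
    (by intro i _; fin_cases i <;> simp)
  rw [show w0 • a + w1 • b + w2 • c + w3 • d = (Finset.univ : Finset (Fin 4)).centerMass ![w0, w1, w2, w3] ![a, b, c, d] from by simp [Finset.centerMass, Fin.sum_univ_four, hs]]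
  exact h


lemma subA (a b c d : E) {m1 m2 m3 : ℝ} (h1 : 0 ≤ m1) (h2 : 0 ≤ m2) (h3 : 0 ≤ m3)
    (hs : m1 + m2 + m3 = 1) (ha : a = m1 • b + m2 • c + m3 • d) :
    ∃ v, v ∈ Submodule.span ℝ ({a, b, c, d} : Set E) ∧
      ∀ x ∈ ({a, b, c, d} : Set E), v - (2:ℝ)⁻¹ • x ∈ convexHull ℝ ({a, b, c, d} : Set E) := by
  refine ⟨(2:ℝ)⁻¹ • b + (2:ℝ)⁻¹ • c + (2:ℝ)⁻¹ • d, ?_, ?_⟩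
  · refine Submodule.add_mem _ (Submodule.add_mem _ ?_ ?_) ?_ <;>
      exact Submodule.smul_mem _ _ (Submodule.subset_span (by simp))
  · intro x hx
    simp only [Set.mem_insert_iff, Set.mem_singleton_iff] at hx
    rcases hx with rfl | rfl | rfl | rfl
    · rw [show (2:ℝ)⁻¹ • b + (2:ℝ)⁻¹ • c + (2:ℝ)⁻¹ • d - (2:ℝ)⁻¹ • x
        = (0:ℝ) • x + ((1-m1)/2) • b + ((1-m2)/2) • c + ((1-m3)/2) • d from by
          rw [ha]; module]
      exact mem_hull4 _ _ _ _ le_rfl (by linarith) (by linarith) (by linarith) (by linarith)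
    · rw [show (2:ℝ)⁻¹ • x + (2:ℝ)⁻¹ • c + (2:ℝ)⁻¹ • d - (2:ℝ)⁻¹ • x
        = (0:ℝ) • a + (0:ℝ) • x + (2:ℝ)⁻¹ • c + (2:ℝ)⁻¹ • d from by module]
      exact mem_hull4 _ _ _ _ le_rfl le_rfl (by norm_num) (by norm_num) (by norm_num)
    · rw [show (2:ℝ)⁻¹ • b + (2:ℝ)⁻¹ • x + (2:ℝ)⁻¹ • d - (2:ℝ)⁻¹ • x
        = (0:ℝ) • a + (2:ℝ)⁻¹ • b + (0:ℝ) • x + (2:ℝ)⁻¹ • d from by module]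
      exact mem_hull4 _ _ _ _ le_rfl (by norm_num) le_rfl (by norm_num) (by norm_num)
    · rw [show (2:ℝ)⁻¹ • b + (2:ℝ)⁻¹ • c + (2:ℝ)⁻¹ • x - (2:ℝ)⁻¹ • x
        = (0:ℝ) • a + (2:ℝ)⁻¹ • b + (2:ℝ)⁻¹ • c + (0:ℝ) • x from by module]
      exact mem_hull4 _ _ _ _ le_rfl (by norm_num) (by norm_num) le_rfl (by norm_num)

lemma subB (a b c d : E) {m0 m1 m2 m3 : ℝ} (h0 : 0 ≤ m0) (h1 : 0 ≤ m1) (h2 : 0 ≤ m2)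
    (h3 : 0 ≤ m3) (hs02 : m0 + m2 = 1) (hs13 : m1 + m3 = 1)
    (heq : m0 • a + m2 • c = m1 • b + m3 • d) :
    ∃ v, v ∈ Submodule.span ℝ ({a, b, c, d} : Set E) ∧
      ∀ x ∈ ({a, b, c, d} : Set E), v - (2:ℝ)⁻¹ • x ∈ convexHull ℝ ({a, b, c, d} : Set E) := by
  have hm2 : m2 = 1 - m0 := by linarith
  have hm3 : m3 = 1 - m1 := by linarith
  subst hm2 hm3
  refine ⟨(2:ℝ)⁻¹ • a + (2:ℝ)⁻¹ • b + (2:ℝ)⁻¹ • c + (2:ℝ)⁻¹ • d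
      - (2:ℝ)⁻¹ • (m0 • a + (1-m0) • c), ?_, ?_⟩
  · refine Submodule.sub_mem _ ?_ ?_
    · refine Submodule.add_mem _ (Submodule.add_mem _ (Submodule.add_mem _ ?_ ?_) ?_) ?_ <;>
        exact Submodule.smul_mem _ _ (Submodule.subset_span (by simp))
    · refine Submodule.smul_mem _ _ (Submodule.add_mem _ ?_ ?_) <;>
        exact Submodule.smul_mem _ _ (Submodule.subset_span (by simp))
  · intro x hx
    simp only [Set.mem_insert_iff, Set.mem_singleton_iff] at hx
    rcases hx with rfl | rfl | rfl | rfl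
    · rw [show (2:ℝ)⁻¹ • x + (2:ℝ)⁻¹ • b + (2:ℝ)⁻¹ • c + (2:ℝ)⁻¹ • d
          - (2:ℝ)⁻¹ • (m0 • x + (1-m0) • c) - (2:ℝ)⁻¹ • x
        = (0:ℝ) • x + ((1-m1)/2) • b + (2:ℝ)⁻¹ • c + (m1/2) • d from by
          rw [heq]; module]
      exact mem_hull4 _ _ _ _ le_rfl (by linarith) (by norm_num) (by linarith) (by linarith)
    · rw [show (2:ℝ)⁻¹ • a + (2:ℝ)⁻¹ • x + (2:ℝ)⁻¹ • c + (2:ℝ)⁻¹ • d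
          - (2:ℝ)⁻¹ • (m0 • a + (1-m0) • c) - (2:ℝ)⁻¹ • x
        = ((1-m0)/2) • a + (0:ℝ) • x + (m0/2) • c + (2:ℝ)⁻¹ • d from by module]
      exact mem_hull4 _ _ _ _ (by linarith) le_rfl (by linarith) (by norm_num) (by linarith)
    · rw [show (2:ℝ)⁻¹ • a + (2:ℝ)⁻¹ • b + (2:ℝ)⁻¹ • x + (2:ℝ)⁻¹ • d
          - (2:ℝ)⁻¹ • (m0 • a + (1-m0) • x) - (2:ℝ)⁻¹ • x
        = (2:ℝ)⁻¹ • a + ((1-m1)/2) • b + (0:ℝ) • x + (m1/2) • d from by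
          rw [heq]; module]
      exact mem_hull4 _ _ _ _ (by norm_num) (by linarith) le_rfl (by linarith) (by linarith)
    · rw [show (2:ℝ)⁻¹ • a + (2:ℝ)⁻¹ • b + (2:ℝ)⁻¹ • c + (2:ℝ)⁻¹ • x
          - (2:ℝ)⁻¹ • (m0 • a + (1-m0) • c) - (2:ℝ)⁻¹ • x
        = ((1-m0)/2) • a + (2:ℝ)⁻¹ • b + (m0/2) • c + (0:ℝ) • x from by module]
      exact mem_hull4 _ _ _ _ (by linarith) (by norm_num) (by linarith) le_rfl (by linarith)

lemma keyA (q0 q1 q2 q3 : E) {l0 l1 l2 l3 : ℝ}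
    (h0 : 0 < l0) (h1 : l1 ≤ 0) (h2 : l2 ≤ 0) (h3 : l3 ≤ 0)
    (hsum : l0 + l1 + l2 + l3 = 0)
    (hdep : l0 • q0 + l1 • q1 + l2 • q2 + l3 • q3 = 0) :
    ∃ v, v ∈ Submodule.span ℝ ({q0, q1, q2, q3} : Set E) ∧
      ∀ x ∈ ({q0, q1, q2, q3} : Set E),
        v - (2:ℝ)⁻¹ • x ∈ convexHull ℝ ({q0, q1, q2, q3} : Set E) := by
  have h0' : l0 ≠ 0 := ne_of_gt h0
  have e1 : l0 • q0 = (-l1) • q1 + (-l2) • q2 + (-l3) • q3 := by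
    linear_combination (norm := module) hdep
  have ha : q0 = (l0⁻¹ * (-l1)) • q1 + (l0⁻¹ * (-l2)) • q2 + (l0⁻¹ * (-l3)) • q3 := by
    calc q0 = l0⁻¹ • (l0 • q0) := (inv_smul_smul₀ h0' q0).symm
    _ = l0⁻¹ • ((-l1) • q1 + (-l2) • q2 + (-l3) • q3) := by rw [e1]
    _ = _ := by rw [smul_add, smul_add, smul_smul, smul_smul, smul_smul]
  refine subA q0 q1 q2 q3 ?_ ?_ ?_ ?_ ha
  · exact mul_nonneg (inv_nonneg.mpr h0.le) (by linarith)
  · exact mul_nonneg (inv_nonneg.mpr h0.le) (by linarith)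
  · exact mul_nonneg (inv_nonneg.mpr h0.le) (by linarith)
  · rw [← mul_add, ← mul_add, show -l1 + -l2 + -l3 = l0 from by linarith,
      inv_mul_cancel₀ h0']

lemma keyB (q0 q1 q2 q3 : E) {l0 l1 l2 l3 : ℝ}
    (h0 : 0 < l0) (h2 : 0 < l2) (h1 : l1 ≤ 0) (h3 : l3 ≤ 0)
    (hsum : l0 + l1 + l2 + l3 = 0)
    (hdep : l0 • q0 + l1 • q1 + l2 • q2 + l3 • q3 = 0) :
    ∃ v, v ∈ Submodule.span ℝ ({q0, q1, q2, q3} : Set E) ∧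
      ∀ x ∈ ({q0, q1, q2, q3} : Set E),
        v - (2:ℝ)⁻¹ • x ∈ convexHull ℝ ({q0, q1, q2, q3} : Set E) := by
  have hs : (0:ℝ) < l0 + l2 := by linarith
  have hs' : l0 + l2 ≠ 0 := ne_of_gt hs
  have e1 : l0 • q0 + l2 • q2 = (-l1) • q1 + (-l3) • q3 := by
    linear_combination (norm := module) hdep
  have heq : ((l0+l2)⁻¹ * l0) • q0 + ((l0+l2)⁻¹ * l2) • q2
      = ((l0+l2)⁻¹ * (-l1)) • q1 + ((l0+l2)⁻¹ * (-l3)) • q3 := by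
    rw [mul_smul, mul_smul, mul_smul, mul_smul, ← smul_add, ← smul_add, e1]
  refine subB q0 q1 q2 q3 ?_ ?_ ?_ ?_ ?_ ?_ heq
  · exact mul_nonneg (inv_nonneg.mpr hs.le) h0.le
  · exact mul_nonneg (inv_nonneg.mpr hs.le) (by linarith)
  · exact mul_nonneg (inv_nonneg.mpr hs.le) h2.le
  · exact mul_nonneg (inv_nonneg.mpr hs.le) (by linarith)
  · rw [← mul_add, inv_mul_cancel₀ hs']
  · rw [← mul_add, show -l1 + -l3 = l0 + l2 from by linarith, inv_mul_cancel₀ hs']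

lemma key (q0 q1 q2 q3 : E) {l0 l1 l2 l3 : ℝ}
    (hsum : l0 + l1 + l2 + l3 = 0)
    (hdep : l0 • q0 + l1 • q1 + l2 • q2 + l3 • q3 = 0)
    (hne : ¬(l0 = 0 ∧ l1 = 0 ∧ l2 = 0 ∧ l3 = 0)) :
    ∃ v, v ∈ Submodule.span ℝ ({q0, q1, q2, q3} : Set E) ∧
      ∀ x ∈ ({q0, q1, q2, q3} : Set E),
        v - (2:ℝ)⁻¹ • x ∈ convexHull ℝ ({q0, q1, q2, q3} : Set E) := by
  have set1 : ({q1, q0, q2, q3} : Set E) = {q0, q1, q2, q3} := by ext x; simp; tauto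
  have set2 : ({q2, q0, q1, q3} : Set E) = {q0, q1, q2, q3} := by ext x; simp; tauto
  have set3 : ({q3, q0, q1, q2} : Set E) = {q0, q1, q2, q3} := by ext x; simp; tauto
  have set4 : ({q2, q0, q3, q1} : Set E) = {q0, q1, q2, q3} := by ext x; simp; tauto
  have set5 : ({q1, q0, q3, q2} : Set E) = {q0, q1, q2, q3} := by ext x; simp; tauto
  have set6 : ({q0, q1, q3, q2} : Set E) = {q0, q1, q2, q3} := by ext x; simp; tauto
  have set7 : ({q0, q2, q1, q3} : Set E) = {q0, q1, q2, q3} := by ext x; simp; tauto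
  rcases le_or_gt l0 0 with h0 | h0 <;> rcases le_or_gt l1 0 with h1 | h1 <;>
    rcases le_or_gt l2 0 with h2 | h2 <;> rcases le_or_gt l3 0 with h3 | h3
  · -- ----
    exact absurd ⟨by linarith, by linarith, by linarith, by linarith⟩ hne
  · -- ---+
    obtain ⟨v, hsp, hmem⟩ := keyA q3 q0 q1 q2 h3 h0 h1 h2 (by linarith)
      (by linear_combination (norm := module) hdep)
    rw [set3] at hsp hmem
    exact ⟨v, hsp, hmem⟩
  · -- --+-
    obtain ⟨v, hsp, hmem⟩ := keyA q2 q0 q1 q3 h2 h0 h1 h3 (by linarith)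
      (by linear_combination (norm := module) hdep)
    rw [set2] at hsp hmem
    exact ⟨v, hsp, hmem⟩
  · -- --++
    obtain ⟨v, hsp, hmem⟩ := keyB q2 q0 q3 q1 h2 h3 h0 h1 (by linarith)
      (by linear_combination (norm := module) hdep)
    rw [set4] at hsp hmem
    exact ⟨v, hsp, hmem⟩
  · -- -+--
    obtain ⟨v, hsp, hmem⟩ := keyA q1 q0 q2 q3 h1 h0 h2 h3 (by linarith)
      (by linear_combination (norm := module) hdep)
    rw [set1] at hsp hmem
    exact ⟨v, hsp, hmem⟩
  · -- -+-+
    obtain ⟨v, hsp, hmem⟩ := keyB q1 q0 q3 q2 h1 h3 h0 h2 (by linarith)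
      (by linear_combination (norm := module) hdep)
    rw [set5] at hsp hmem
    exact ⟨v, hsp, hmem⟩
  · -- -++-
    obtain ⟨v, hsp, hmem⟩ := keyB q1 q0 q2 q3 h1 h2 h0 h3 (by linarith)
      (by linear_combination (norm := module) hdep)
    rw [set1] at hsp hmem
    exact ⟨v, hsp, hmem⟩
  · -- -+++ : l0 < 0
    have h0' : (0:ℝ) < -l0 := by linarith
    obtain ⟨v, hsp, hmem⟩ := keyA q0 q1 q2 q3 (l0 := -l0) (l1 := -l1) (l2 := -l2)
      (l3 := -l3) h0' (by linarith) (by linarith) (by linarith) (by linarith)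
      (by linear_combination (norm := module) -hdep)
    exact ⟨v, hsp, hmem⟩
  · -- +---
    exact keyA q0 q1 q2 q3 h0 h1 h2 h3 hsum hdep
  · -- +--+
    obtain ⟨v, hsp, hmem⟩ := keyB q0 q1 q3 q2 h0 h3 h1 h2 (by linarith)
      (by linear_combination (norm := module) hdep)
    rw [set6] at hsp hmem
    exact ⟨v, hsp, hmem⟩
  · -- +-+-
    exact keyB q0 q1 q2 q3 h0 h2 h1 h3 hsum hdep
  · -- +-++ : l1 < 0
    have h1' : (0:ℝ) < -l1 := by linarith
    obtain ⟨v, hsp, hmem⟩ := keyA q1 q0 q2 q3 (l0 := -l1) (l1 := -l0) (l2 := -l2)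
      (l3 := -l3) h1' (by linarith) (by linarith) (by linarith) (by linarith)
      (by linear_combination (norm := module) -hdep)
    rw [set1] at hsp hmem
    exact ⟨v, hsp, hmem⟩
  · -- ++--
    obtain ⟨v, hsp, hmem⟩ := keyB q0 q2 q1 q3 h0 h1 h2 h3 (by linarith)
      (by linear_combination (norm := module) hdep)
    rw [set7] at hsp hmem
    exact ⟨v, hsp, hmem⟩
  · -- ++-+ : l2 < 0
    have h2' : (0:ℝ) < -l2 := by linarith
    obtain ⟨v, hsp, hmem⟩ := keyA q2 q0 q1 q3 (l0 := -l2) (l1 := -l0) (l2 := -l1)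
      (l3 := -l3) h2' (by linarith) (by linarith) (by linarith) (by linarith)
      (by linear_combination (norm := module) -hdep)
    rw [set2] at hsp hmem
    exact ⟨v, hsp, hmem⟩
  · -- +++- : l3 < 0
    have h3' : (0:ℝ) < -l3 := by linarith
    obtain ⟨v, hsp, hmem⟩ := keyA q3 q0 q1 q2 (l0 := -l3) (l1 := -l0) (l2 := -l1)
      (l3 := -l2) h3' (by linarith) (by linarith) (by linarith) (by linarith)
      (by linear_combination (norm := module) -hdep)
    rw [set3] at hsp hmem
    exact ⟨v, hsp, hmem⟩
  · -- ++++
    exact absurd hsum (by positivity)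

end Aux

theorem inverted_half_tetrahedron_hides_behind :
    HidesBehind ((-(1/2) : ℝ) • T) T := by
  intro u hu
  have hune : u ≠ 0 := by intro h; rw [h, norm_zero] at hu; norm_num at hu
  set F : EuclideanSpace ℝ (Fin 3) →ₗ[ℝ] EuclideanSpace ℝ (Fin 3) :=
    ((ℝ ∙ u)ᗮ).subtype ∘ₗ (Submodule.orthogonalProjectionOnto (ℝ ∙ u)ᗮ).toLinearMap with hF
  have hproj : proj u = ⇑F := rfl
  have hFmem : ∀ x, F x ∈ (ℝ ∙ u)ᗮ := fun x => (Submodule.orthogonalProjectionOnto (ℝ ∙ u)ᗮ x).2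
  have hFu : F u = 0 := by
    have : Submodule.orthogonalProjectionOnto (ℝ ∙ u)ᗮ u = 0 :=
      Submodule.orthogonalProjectionOnto_apply_of_mem_orthogonal
        (Submodule.le_orthogonal_orthogonal _ (Submodule.mem_span_singleton_self u))
    simp [hF, this]
  set p0 : EuclideanSpace ℝ (Fin 3) := !₂[0, 0, 0] with hp0
  set p1 : EuclideanSpace ℝ (Fin 3) := !₂[1, 0, 0] with hp1
  set p2 : EuclideanSpace ℝ (Fin 3) := !₂[1/2, Real.sqrt 3 / 2, 0] with hp2
  set p3 : EuclideanSpace ℝ (Fin 3) := !₂[1/2, Real.sqrt 3 / 6, Real.sqrt (2/3)] with hp3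
  have hT : T = convexHull ℝ ({p0, p1, p2, p3} : Set (EuclideanSpace ℝ (Fin 3))) := rfl
  have h3 : Real.sqrt 3 ≠ 0 := ne_of_gt (Real.sqrt_pos.mpr (by norm_num))
  have h23 : Real.sqrt (2/3) ≠ 0 := ne_of_gt (Real.sqrt_pos.mpr (by norm_num))
  set c3 : ℝ := u 2 / Real.sqrt (2/3) with hc3
  set c2 : ℝ := (u 1 - c3 * (Real.sqrt 3 / 6)) * 2 / Real.sqrt 3 with hc2
  set c1 : ℝ := u 0 - c2 / 2 - c3 / 2 with hc1
  set c0 : ℝ := -(c1 + c2 + c3) with hc0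
  have hcomb : c0 • p0 + c1 • p1 + c2 • p2 + c3 • p3 = u := by
    ext i
    fin_cases i
    · show c0 * 0 + c1 * 1 + c2 * (1/2) + c3 * (1/2) = u 0
      rw [hc1]; ring
    · show c0 * 0 + c1 * 0 + c2 * (Real.sqrt 3 / 2) + c3 * (Real.sqrt 3 / 6) = u 1
      rw [hc2]; field_simp; ring
    · show c0 * 0 + c1 * 0 + c2 * 0 + c3 * Real.sqrt (2/3) = u 2
      rw [hc3]; field_simp; ring
  have hsum : c0 + c1 + c2 + c3 = 0 := by rw [hc0]; ring
  have hdep : c0 • F p0 + c1 • F p1 + c2 • F p2 + c3 • F p3 = 0 := by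
    rw [← _root_.map_smul, ← _root_.map_smul, ← _root_.map_smul, ← _root_.map_smul, ← map_add, ← map_add, ← map_add,
      hcomb, hFu]
  have hne : ¬(c0 = 0 ∧ c1 = 0 ∧ c2 = 0 ∧ c3 = 0) := by
    rintro ⟨e0, e1, e2, e3⟩
    rw [e0, e1, e2, e3] at hcomb
    simp at hcomb
    exact hune hcomb.symm
  obtain ⟨v, hsp, hmem⟩ := key (F p0) (F p1) (F p2) (F p3) hsum hdep hne
  refine ⟨v, ?_, ?_⟩
  · have hle : Submodule.span ℝ ({F p0, F p1, F p2, F p3} :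
        Set (EuclideanSpace ℝ (Fin 3))) ≤ (ℝ ∙ u)ᗮ := by
      rw [Submodule.span_le]
      intro x hx
      simp only [Set.mem_insert_iff, Set.mem_singleton_iff] at hx
      rcases hx with rfl | rfl | rfl | rfl <;> exact hFmem _
    exact hle hsp
  · have himg : proj u '' T = convexHull ℝ ({F p0, F p1, F p2, F p3} :
        Set (EuclideanSpace ℝ (Fin 3))) := by
      rw [hproj, hT, F.image_convexHull, Set.image_insert_eq, Set.image_insert_eq,
        Set.image_insert_eq, Set.image_singleton]
    intro x hx
    obtain ⟨y, hy, rfl⟩ := hx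
    obtain ⟨z, hz, rfl⟩ := hy
    obtain ⟨t, ht, rfl⟩ := hz
    set g : EuclideanSpace ℝ (Fin 3) →ᵃ[ℝ] EuclideanSpace ℝ (Fin 3) :=
      AffineMap.const ℝ (EuclideanSpace ℝ (Fin 3)) v + ((-(1/2) : ℝ) • F).toAffineMap with hg
    have hgval : ∀ z, g z = v + (-(1/2) : ℝ) • F z := fun z => rfl
    have hx2 : v +ᵥ proj u ((-(1/2):ℝ) • t) = g t := by
      rw [hproj, hgval, _root_.map_smul, vadd_eq_add]
    show v +ᵥ proj u ((-(1/2):ℝ) • t) ∈ proj u '' T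
    rw [hx2, himg]
    have h1 : g t ∈ g '' (convexHull ℝ ({p0, p1, p2, p3} :
        Set (EuclideanSpace ℝ (Fin 3)))) := Set.mem_image_of_mem _ (by rw [← hT]; exact ht)
    rw [AffineMap.image_convexHull] at h1
    refine convexHull_min ?_ (convex_convexHull ℝ _) h1
    rintro w ⟨s, hs, rfl⟩
    simp only [Set.mem_insert_iff, Set.mem_singleton_iff] at hs
    have hgmem : ∀ p : EuclideanSpace ℝ (Fin 3),
        F p ∈ ({F p0, F p1, F p2, F p3} : Set (EuclideanSpace ℝ (Fin 3))) →
        g p ∈ convexHull ℝ ({F p0, F p1, F p2, F p3} : Set (EuclideanSpace ℝ (Fin 3))) := by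
      intro p hp
      have he : g p = v - (2:ℝ)⁻¹ • F p := by rw [hgval]; module
      rw [he]; exact hmem _ hp
    rcases hs with rfl | rfl | rfl | rfl <;> exact hgmem _ (by simp)
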